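/- Let μ ≤ κ ≤ θ be regular uncountable cardinals and Y ⊆ P_κ(H(θ)) stationary. If ISP_Y(μ, κ, H(θ)) holds (every μ-Y-slender (κ, H(θ))-list has a Y-ineffable branch), then GMP_Y(μ, κ, θ) holds: the set of M ∈ Y that are μ-guessing models is stationary in P_κ(H(θ)). -/

import Mathlib

open Cardinal

universe u

/-- `H(θ)`: the class of sets hereditarily of cardinality `< θ`. -/
def Hset (θ : Cardinal.{u + 1}) : Set ZFSet.{u} :=
  {x : ZFSet.{u} | ZFSet.Hereditarily (fun y => #y.toSet < θ) x}

/-- `C` is a club in `P_κ(A)`: elements are subsets of `A` of size `< κ`, `C` is closed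
under unions of nonempty `⊆`-chains of length `< κ`, and `C` is cofinal. -/
def ClubIn (κ : Cardinal.{u + 1}) (A : Set ZFSet.{u}) (C : Set (Set ZFSet.{u})) : Prop :=
  (∀ y ∈ C, y ⊆ A ∧ #y < κ) ∧
    (∀ D : Set (Set ZFSet.{u}), D ⊆ C → D.Nonempty → #D < κ → IsChain (· ⊆ ·) D →
      ⋃₀ D ∈ C) ∧
    (∀ x : Set ZFSet.{u}, x ⊆ A → #x < κ → ∃ y ∈ C, x ⊆ y)

/-- `S` is stationary in `P_κ(A)`: it meets every club in `P_κ(A)`. -/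
def StatIn (κ : Cardinal.{u + 1}) (A : Set ZFSet.{u}) (S : Set (Set ZFSet.{u})) : Prop :=
  (∀ y ∈ S, y ⊆ A ∧ #y < κ) ∧ ∀ C : Set (Set ZFSet.{u}), ClubIn κ A C → (S ∩ C).Nonempty

/-- `d` is `(μ, M)`-approximated (as a subset of `x`): for every `z ∈ M ∩ P_μ(x)` there is
`e ∈ M` with `d ∩ z = e ∩ z`. -/
def Approx (μ : Cardinal.{u + 1}) (M : Set ZFSet.{u}) (x : ZFSet.{u})
    (d : Set ZFSet.{u}) : Prop :=
  ∀ z : ZFSet.{u}, z ∈ M → z.toSet ⊆ x.toSet → #z.toSet < μ →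
    ∃ e ∈ M, d ∩ z.toSet = e.toSet ∩ z.toSet

/-- `d` is `M`-guessed: there is `e ∈ M` with `d ∩ M = e ∩ M`. -/
def Guessed (M : Set ZFSet.{u}) (d : Set ZFSet.{u}) : Prop :=
  ∃ e ∈ M, d ∩ M = e.toSet ∩ M

/-- Every `(μ, M)`-approximated subset of `x` is `M`-guessed. -/
def GuessingFor (μ : Cardinal.{u + 1}) (M : Set ZFSet.{u}) (x : ZFSet.{u}) : Prop :=
  ∀ d : Set ZFSet.{u}, d ⊆ x.toSet → Approx μ M x d → Guessed M d

/-- The first-order language with a single binary relation symbol (for `∈`). -/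
def L : FirstOrder.Language :=
  { Functions := fun _ => Empty
    Relations := fun n => match n with | 2 => PUnit | _ => Empty }

/-- The `∈`-structure on a set `A` of ZFC sets. -/
def setStructure (A : Set ZFSet.{u}) : L.Structure A where
  funMap := fun f _ => f.elim
  RelMap := fun {n} r v =>
    match n, r, v with
    | 0, r, _ => r.elim
    | 1, r, _ => r.elim
    | 2, _, v => (v 0 : ZFSet.{u}) ∈ (v 1 : ZFSet.{u})
    | _ + 3, r, _ => r.elim

/-- Realization of a first-order `∈`-formula in the structure `(A, ∈)`. -/
def RealizeIn (A : Set ZFSet.{u}) {n : ℕ} (φ : L.Formula (Fin n)) (v : Fin n → A) : Prop :=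
  letI := setStructure A
  φ.Realize v

/-- `M ≺ A` as `∈`-structures: `M ⊆ A` and every first-order formula with parameters from
`M` holds in `(M, ∈)` iff it holds in `(A, ∈)`. -/
def ElemIn (M A : Set ZFSet.{u}) : Prop :=
  M ⊆ A ∧ ∀ (n : ℕ) (φ : L.Formula (Fin n)) (v : Fin n → ZFSet.{u})
    (hM : ∀ i, v i ∈ M) (hA : ∀ i, v i ∈ A),
      (RealizeIn M φ fun i => ⟨v i, hM i⟩) ↔ (RealizeIn A φ fun i => ⟨v i, hA i⟩)

/-- The `(κ, X)`-list `d` is `μ`-`Y`-slender: for all sufficiently large `θ` there is a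
club `C ⊆ P_κ(H(θ))` such that for all `M ∈ C` with `M ∩ X ∈ Y` and all
`y ∈ M ∩ P_μ(X)`, `d_{M ∩ X} ∩ y ∈ M`. -/
def Slender (μ κ : Cardinal.{u + 1}) (X : Set ZFSet.{u}) (Y : Set (Set ZFSet.{u}))
    (d : Set ZFSet.{u} → Set ZFSet.{u}) : Prop :=
  ∃ θ₀ : Cardinal.{u + 1}, ∀ θ : Cardinal.{u + 1}, θ₀ ≤ θ →
    ∃ C : Set (Set ZFSet.{u}), ClubIn κ (Hset θ) C ∧
      ∀ M ∈ C, M ∩ X ∈ Y →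
        ∀ y : ZFSet.{u}, y ∈ M → y.toSet ⊆ X → #y.toSet < μ →
          ∃ e ∈ M, e.toSet = d (M ∩ X) ∩ y.toSet

/-- `b` is a cofinal branch of the `(κ, X)`-list `d`. -/
def CofBranch (κ : Cardinal.{u + 1}) (X : Set ZFSet.{u})
    (d : Set ZFSet.{u} → Set ZFSet.{u}) (b : Set ZFSet.{u}) : Prop :=
  b ⊆ X ∧ ∀ x : Set ZFSet.{u}, x ⊆ X → #x < κ →
    ∃ z : Set ZFSet.{u}, z ⊆ X ∧ #z < κ ∧ x ⊆ z ∧ b ∩ x = d z ∩ x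

/-- `b` is a `Y`-ineffable branch of the `(κ, X)`-list `d`: the set of `x ∈ Y` with
`b ∩ x = d_x` is stationary in `P_κ(X)`. -/
def IneffBranch (κ : Cardinal.{u + 1}) (X : Set ZFSet.{u}) (Y : Set (Set ZFSet.{u}))
    (d : Set ZFSet.{u} → Set ZFSet.{u}) (b : Set ZFSet.{u}) : Prop :=
  b ⊆ X ∧ StatIn κ X {x : Set ZFSet.{u} | x ∈ Y ∧ b ∩ x = d x}

/-! ### Auxiliary material -/

namespace ZFSet

theorem mem_toSet (a u : ZFSet.{u}) : a ∈ u.toSet ↔ a ∈ u := Iff.rfl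

theorem toSet_empty : (∅ : ZFSet.{u}).toSet = ∅ := ZFSet.coe_empty

theorem toSet_insert (x y : ZFSet.{u}) : (insert x y).toSet = insert x y.toSet :=
  ZFSet.coe_insert x y

theorem toSet_union (x y : ZFSet.{u}) : (x ∪ y).toSet = x.toSet ∪ y.toSet :=
  ZFSet.coe_union x y

theorem toSet_inter (x y : ZFSet.{u}) : (x ∩ y).toSet = x.toSet ∩ y.toSet :=
  ZFSet.coe_inter x y

theorem toSet_sep (a : ZFSet.{u}) (p : ZFSet.{u} → Prop) :
    (ZFSet.sep p a).toSet = {x ∈ a.toSet | p x} :=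
  ZFSet.coe_sep a p

end ZFSet

namespace GMPAux

open ZFSet FirstOrder

/-- the ZFC set `{∅}`, used as a tag -/
noncomputable def one : ZFSet.{u} := ({∅} : ZFSet.{u})

theorem mem_one : ∀ {z : ZFSet.{u}}, z ∈ one ↔ z = ∅ := by
  intro z; simp [one]

theorem one_ne_empty : (one : ZFSet.{u}) ≠ ∅ := by
  intro h
  have : (∅ : ZFSet.{u}) ∈ (one : ZFSet.{u}) := mem_one.2 rfl
  rw [h] at this
  exact ZFSet.notMem_empty _ this

/-- transitivity of `Hset θ` -/
theorem Hset_mem {θ : Cardinal.{u+1}} {x y : ZFSet.{u}} (hx : x ∈ Hset θ) (hy : y ∈ x) :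
    y ∈ Hset θ := hx.mem hy

theorem Hset_toSet_subset {θ : Cardinal.{u+1}} {x : ZFSet.{u}} (hx : x ∈ Hset θ) :
    x.toSet ⊆ Hset θ := fun _ hy => Hset_mem hx hy

theorem mem_Hset_of {θ : Cardinal.{u+1}} {x : ZFSet.{u}}
    (h1 : ∀ a ∈ x, a ∈ Hset θ) (h2 : #x.toSet < θ) : x ∈ Hset θ :=
  ZFSet.hereditarily_iff.2 ⟨h2, h1⟩

theorem card_Hset_mem {θ : Cardinal.{u+1}} {x : ZFSet.{u}} (hx : x ∈ Hset θ) :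
    Cardinal.mk x.toSet < θ := hx.self

theorem Hset_mono {θ θ' : Cardinal.{u+1}} (h : θ ≤ θ') : Hset θ ⊆ Hset θ' := by
  intro x
  induction x using ZFSet.inductionOn with
  | _ x IH =>
    intro hx
    exact mem_Hset_of (fun a ha => IH a ha (Hset_mem hx ha)) (lt_of_lt_of_le (card_Hset_mem hx) h)

theorem card_toSet_mono {x y : ZFSet.{u}} (h : x ⊆ y) : #x.toSet ≤ #y.toSet :=
  Cardinal.mk_le_mk_of_subset (fun _ hz => h hz)

theorem empty_mem_Hset {θ : Cardinal.{u+1}} (hθ : Cardinal.aleph0 ≤ θ) :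
    (∅ : ZFSet.{u}) ∈ Hset θ := by
  refine mem_Hset_of (fun a ha => absurd ha (ZFSet.notMem_empty a)) ?_
  rw [ZFSet.toSet_empty, Cardinal.mk_emptyCollection]
  exact lt_of_lt_of_le Cardinal.aleph0_pos hθ

theorem insert_mem_Hset {θ : Cardinal.{u+1}} (hθ : Cardinal.aleph0 ≤ θ) {x y : ZFSet.{u}}
    (hx : x ∈ Hset θ) (hy : y ∈ Hset θ) : (insert x y : ZFSet.{u}) ∈ Hset θ := by
  refine mem_Hset_of (fun a ha => ?_) ?_
  · rcases ZFSet.mem_insert_iff.1 ha with rfl | h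
    · exact hx
    · exact Hset_mem hy h
  · rw [ZFSet.toSet_insert]
    calc #(insert x y.toSet : Set ZFSet) ≤ #y.toSet + 1 := Cardinal.mk_insert_le
    _ < θ := Cardinal.add_lt_of_lt hθ (card_Hset_mem hy)
        (lt_of_lt_of_le Cardinal.one_lt_aleph0 hθ)

theorem singleton_mem_Hset {θ : Cardinal.{u+1}} (hθ : Cardinal.aleph0 ≤ θ) {x : ZFSet.{u}}
    (hx : x ∈ Hset θ) : ({x} : ZFSet.{u}) ∈ Hset θ :=
  insert_mem_Hset hθ hx (empty_mem_Hset hθ)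

theorem one_mem_Hset {θ : Cardinal.{u+1}} (hθ : Cardinal.aleph0 ≤ θ) :
    (one : ZFSet.{u}) ∈ Hset θ := singleton_mem_Hset hθ (empty_mem_Hset hθ)

theorem pair_mem_Hset {θ : Cardinal.{u+1}} (hθ : Cardinal.aleph0 ≤ θ) {x y : ZFSet.{u}}
    (hx : x ∈ Hset θ) (hy : y ∈ Hset θ) : ZFSet.pair x y ∈ Hset θ := by
  have h1 : ({x} : ZFSet.{u}) ∈ Hset θ := singleton_mem_Hset hθ hx
  have h2 : ({x, y} : ZFSet.{u}) ∈ Hset θ :=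
    insert_mem_Hset hθ hx (singleton_mem_Hset hθ hy)
  exact insert_mem_Hset hθ h1 (singleton_mem_Hset hθ h2)

theorem sep_mem_Hset {θ : Cardinal.{u+1}} {p : ZFSet.{u} → Prop} {x : ZFSet.{u}}
    (hx : x ∈ Hset θ) : ZFSet.sep p x ∈ Hset θ := by
  refine mem_Hset_of (fun a ha => Hset_mem hx (ZFSet.mem_sep.1 ha).1) ?_
  refine lt_of_le_of_lt (card_toSet_mono ?_) (card_Hset_mem hx)
  intro a ha; exact (ZFSet.mem_sep.1 ha).1

theorem subset_mem_Hset {θ : Cardinal.{u+1}} {x y : ZFSet.{u}} (hx : x ∈ Hset θ)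
    (h : y ⊆ x) : y ∈ Hset θ := by
  refine mem_Hset_of (fun a ha => Hset_mem hx (h ha)) (lt_of_le_of_lt (card_toSet_mono h)
    (card_Hset_mem hx))

theorem union_mem_Hset {θ : Cardinal.{u+1}} (hθ : Cardinal.aleph0 ≤ θ) {x y : ZFSet.{u}}
    (hx : x ∈ Hset θ) (hy : y ∈ Hset θ) : (x ∪ y : ZFSet.{u}) ∈ Hset θ := by
  refine mem_Hset_of (fun a ha => ?_) ?_
  · rcases ZFSet.mem_union.1 ha with h | h
    · exact Hset_mem hx h
    · exact Hset_mem hy h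
  · rw [ZFSet.toSet_union]
    calc #(x.toSet ∪ y.toSet : Set ZFSet) ≤ #x.toSet + #y.toSet := Cardinal.mk_union_le _ _
    _ < θ := Cardinal.add_lt_of_lt hθ (card_Hset_mem hx) (card_Hset_mem hy)

theorem inter_mem_Hset {θ : Cardinal.{u+1}} {x y : ZFSet.{u}}
    (hx : x ∈ Hset θ) : (x ∩ y : ZFSet.{u}) ∈ Hset θ := by
  refine subset_mem_Hset hx (fun a ha => (ZFSet.mem_inter.1 ha).1)

/-- the von Neumann naturals -/
noncomputable def natOf : ℕ → ZFSet.{u}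
  | 0 => ∅
  | n + 1 => insert (natOf n) (natOf n)

theorem natOf_mem_of_lt : ∀ {m n : ℕ}, m < n → (natOf m : ZFSet.{u}) ∈ natOf n := by
  intro m n h
  induction n with
  | zero => omega
  | succ k IH =>
    rcases Nat.lt_succ_iff_lt_or_eq.1 h with h' | rfl
    · exact ZFSet.mem_insert_iff.2 (Or.inr (IH h'))
    · exact ZFSet.mem_insert_iff.2 (Or.inl rfl)

theorem natOf_injective : Function.Injective (natOf : ℕ → ZFSet.{u}) := by
  intro m n h
  by_contra hne
  rcases Nat.lt_or_ge m n with hlt | hge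
  · exact ZFSet.mem_irrefl _ (h ▸ natOf_mem_of_lt hlt)
  · have : n < m := lt_of_le_of_ne hge (Ne.symm hne)
    exact ZFSet.mem_irrefl _ (h ▸ natOf_mem_of_lt this)

theorem natOf_mem_Hset {θ : Cardinal.{u+1}} (hθ : Cardinal.aleph0 ≤ θ) (n : ℕ) :
    (natOf n : ZFSet.{u}) ∈ Hset θ := by
  induction n with
  | zero => exact empty_mem_Hset hθ
  | succ k IH => exact insert_mem_Hset hθ IH IH

theorem aleph0_le_mk_Hset {θ : Cardinal.{u+1}} (hθ : Cardinal.aleph0 ≤ θ) :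
    Cardinal.aleph0 ≤ #(Hset θ : Set ZFSet.{u}) := by
  rw [Cardinal.aleph0_le_mk_iff]
  exact Infinite.of_injective (fun n : ℕ => (⟨natOf n, natOf_mem_Hset hθ n⟩ : Hset θ))
    (fun m n h => natOf_injective (congrArg Subtype.val h))

end GMPAux

namespace GMPAux

open ZFSet Set

variable {κ μ : Cardinal.{u+1}} {A : Set ZFSet.{u}}

theorem chain_total {D : Set (Set ZFSet.{u})} (hch : IsChain (· ⊆ ·) D) {M₁ M₂ : Set ZFSet.{u}}
    (h1 : M₁ ∈ D) (h2 : M₂ ∈ D) : M₁ ⊆ M₂ ∨ M₂ ⊆ M₁ := by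
  by_cases h : M₁ = M₂
  · exact Or.inl h.le
  · exact hch h1 h2 h

theorem card_sUnion_lt (hκ : κ.IsRegular) {D : Set (Set ZFSet.{u})} (hD : #D < κ)
    (h : ∀ y ∈ D, #y < κ) : #(⋃₀ D : Set ZFSet.{u}) < κ := by
  rw [Set.sUnion_eq_iUnion]
  exact lt_of_le_of_lt Cardinal.mk_iUnion_le_sum_mk
    (Cardinal.sum_lt_of_isRegular hκ hD (fun i => h i i.2))

theorem mono_of_succ {g : ℕ → Set ZFSet.{u}} (h : ∀ k, g k ⊆ g (k + 1)) :
    ∀ {k l : ℕ}, k ≤ l → g k ⊆ g l := by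
  intro k l hkl
  induction l with
  | zero => rw [Nat.le_zero.1 hkl]
  | succ m IH =>
    rcases Nat.le_succ_iff_eq_or_le.1 hkl with rfl | hle
    · rfl
    · exact (IH hle).trans (h m)

theorem chain_range_of_mono {g : ℕ → Set ZFSet.{u}} (h : ∀ k, g k ⊆ g (k + 1)) :
    IsChain (· ⊆ ·) (Set.range g) := by
  rintro _ ⟨k, rfl⟩ _ ⟨l, rfl⟩ _
  rcases Nat.le_total k l with hkl | hlk
  · exact Or.inl (mono_of_succ h hkl)
  · exact Or.inr (mono_of_succ h hlk)

theorem card_range_lt (hκ : κ.IsRegular) (hℵκ : Cardinal.aleph0 < κ) (g : ℕ → Set ZFSet.{u}) :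
    #(Set.range g) < κ :=
  lt_of_le_of_lt (Cardinal.mk_le_aleph0_iff.2 (Set.countable_range g).to_subtype) hℵκ

/-- Intersection of two clubs is a club. -/
theorem club_inter (hκ : κ.IsRegular) (hℵκ : Cardinal.aleph0 < κ)
    {C C' : Set (Set ZFSet.{u})} (h : ClubIn κ A C) (h' : ClubIn κ A C') :
    ClubIn κ A (C ∩ C') := by
  refine ⟨fun y hy => h.1 y hy.1, fun D hD hne hcard hch =>
    ⟨h.2.1 D (fun y hy => (hD hy).1) hne hcard hch,
     h'.2.1 D (fun y hy => (hD hy).2) hne hcard hch⟩, ?_⟩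
  intro x hx hxc
  -- alternating chain
  have stepC : ∀ s : Set ZFSet.{u}, s ⊆ A → #s < κ →
      {y : Set ZFSet.{u} // y ∈ C ∧ s ⊆ y ∧ y ⊆ A ∧ #y < κ} := by
    intro s hs hsc
    have hE := h.2.2 s hs hsc
    refine ⟨hE.choose, hE.choose_spec.1, hE.choose_spec.2,
      (h.1 _ hE.choose_spec.1).1, (h.1 _ hE.choose_spec.1).2⟩
  have stepC' : ∀ s : Set ZFSet.{u}, s ⊆ A → #s < κ →
      {y : Set ZFSet.{u} // y ∈ C' ∧ s ⊆ y ∧ y ⊆ A ∧ #y < κ} := by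
    intro s hs hsc
    have hE := h'.2.2 s hs hsc
    refine ⟨hE.choose, hE.choose_spec.1, hE.choose_spec.2,
      (h'.1 _ hE.choose_spec.1).1, (h'.1 _ hE.choose_spec.1).2⟩
  -- seq : ℕ → {y // (even-index → ∈ C) ∧ (odd-index → ∈ C') ∧ ...}
  let T := {p : Set ZFSet.{u} × Bool // (p.2 = true → p.1 ∈ C) ∧ (p.2 = false → p.1 ∈ C') ∧
    p.1 ⊆ A ∧ #p.1 < κ}
  let next : T → T := fun p =>
    if hb : p.1.2 = true then
      ⟨((stepC' p.1.1 p.2.2.2.1 p.2.2.2.2).1, false),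
        fun hc => absurd hc (by simp), fun _ => (stepC' p.1.1 p.2.2.2.1 p.2.2.2.2).2.1,
        (stepC' p.1.1 p.2.2.2.1 p.2.2.2.2).2.2.2.1, (stepC' p.1.1 p.2.2.2.1 p.2.2.2.2).2.2.2.2⟩
    else
      ⟨((stepC p.1.1 p.2.2.2.1 p.2.2.2.2).1, true),
        fun _ => (stepC p.1.1 p.2.2.2.1 p.2.2.2.2).2.1, fun hc => absurd hc (by simp),
        (stepC p.1.1 p.2.2.2.1 p.2.2.2.2).2.2.2.1, (stepC p.1.1 p.2.2.2.1 p.2.2.2.2).2.2.2.2⟩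
  have hnext_sub : ∀ p : T, p.1.1 ⊆ (next p).1.1 := by
    intro p
    by_cases hb : p.1.2 = true <;> simp only [next, hb, dite_true, dite_false] <;>
      first
        | exact (stepC' p.1.1 p.2.2.2.1 p.2.2.2.2).2.2.1
        | exact (stepC p.1.1 p.2.2.2.1 p.2.2.2.2).2.2.1
  have hnext_flip : ∀ p : T, (next p).1.2 = !p.1.2 := by
    intro p
    by_cases hb : p.1.2 = true <;> simp [next, hb]
  -- start
  let p0 : T := ⟨((stepC x hx hxc).1, true), fun _ => (stepC x hx hxc).2.1,
    fun hc => absurd hc (by simp), (stepC x hx hxc).2.2.2.1, (stepC x hx hxc).2.2.2.2⟩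
  let seq : ℕ → T := fun k => next^[k] p0
  have hseq_succ : ∀ k, seq (k + 1) = next (seq k) := by
    intro k
    simp only [seq, Function.iterate_succ_apply']
  have hseq_mono : ∀ k, (seq k).1.1 ⊆ (seq (k + 1)).1.1 := by
    intro k; rw [hseq_succ]; exact hnext_sub _
  have hseq_bool : ∀ k, (seq k).1.2 = (k % 2 = 0 : Bool) := by
    intro k
    induction k with
    | zero => rfl
    | succ m IH =>
      rw [hseq_succ, hnext_flip, IH]
      rcases Nat.even_or_odd m with he | ho
      · have h1 : m % 2 = 0 := Nat.even_iff.1 he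
        have h2 : (m + 1) % 2 = 1 := by omega
        simp [h1, h2]
      · have h1 : m % 2 = 1 := Nat.odd_iff.1 ho
        have h2 : (m + 1) % 2 = 0 := by omega
        simp [h1, h2]
  have hseqC : ∀ k, (seq (2 * k)).1.1 ∈ C := by
    intro k
    refine (seq (2 * k)).2.1 ?_
    rw [hseq_bool]; simp [Nat.mul_mod_right]
  have hseqC' : ∀ k, (seq (2 * k + 1)).1.1 ∈ C' := by
    intro k
    refine (seq (2 * k + 1)).2.2.1 ?_
    rw [hseq_bool]; simp [Nat.add_mul_mod_self_left, Nat.mul_mod_right]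
  -- the union
  set g : ℕ → Set ZFSet.{u} := fun k => (seq k).1.1 with hg
  have hgmono : ∀ k, g k ⊆ g (k + 1) := hseq_mono
  have hUeq : ∀ c : ℕ, ⋃₀ Set.range (fun k => g (2 * k + c)) = ⋃₀ Set.range g := by
    intro c
    rw [Set.sUnion_range, Set.sUnion_range]
    apply le_antisymm
    · exact Set.iUnion_subset fun k => Set.subset_iUnion g (2 * k + c)
    · exact Set.iUnion_subset fun k =>
        (mono_of_succ hgmono (by omega : k ≤ 2 * k + c)).trans
          (Set.subset_iUnion (fun k => g (2 * k + c)) k)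
  have hUC : ⋃₀ Set.range g ∈ C := by
    rw [← hUeq 0]
    refine h.2.1 _ ?_ ⟨g 0, ⟨0, rfl⟩⟩ (card_range_lt hκ hℵκ _) ?_
    · rintro _ ⟨k, rfl⟩; simpa using hseqC k
    · exact chain_range_of_mono (fun k => (mono_of_succ hgmono (by omega)))
  have hUC' : ⋃₀ Set.range g ∈ C' := by
    rw [← hUeq 1]
    refine h'.2.1 _ ?_ ⟨g 1, ⟨0, rfl⟩⟩ (card_range_lt hκ hℵκ _) ?_
    · rintro _ ⟨k, rfl⟩; exact hseqC' k
    · exact chain_range_of_mono (fun k => (mono_of_succ hgmono (by omega)))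
  refine ⟨⋃₀ Set.range g, ⟨hUC, hUC'⟩, ?_⟩
  have : x ⊆ g 0 := (stepC x hx hxc).2.2.1
  exact this.trans (by rw [Set.sUnion_range]; exact Set.subset_iUnion g 0)

/-- The closure-properties set. -/
def IsCl (μ κ : Cardinal.{u+1}) (F : ℕ → ZFSet.{u} → ZFSet.{u} → ZFSet.{u})
    (A R M : Set ZFSet.{u}) : Prop :=
  R ⊆ M ∧ M ⊆ A ∧ #M < κ ∧ (∅ : ZFSet.{u}) ∈ M ∧ one ∈ M ∧
    (∀ (n : ℕ) (a b : ZFSet.{u}), a ∈ M → b ∈ M → F n a b ∈ M) ∧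
    (∀ w : ZFSet.{u}, w ∈ M → #w.toSet < μ → w.toSet ⊆ M)

theorem Ecl_club (hκ : κ.IsRegular) (hℵκ : Cardinal.aleph0 < κ) (hμκ : μ ≤ κ)
    (F : ℕ → ZFSet.{u} → ZFSet.{u} → ZFSet.{u})
    (hA : ∀ x ∈ A, ZFSet.toSet x ⊆ A)
    (hAF : ∀ (n : ℕ) (a b : ZFSet.{u}), a ∈ A → b ∈ A → F n a b ∈ A)
    (hemp : (∅ : ZFSet.{u}) ∈ A) (h1 : one ∈ A)
    {R : Set ZFSet.{u}} (hR : R ⊆ A) (hRc : #R < κ) :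
    ClubIn κ A {M | IsCl μ κ F A R M} := by
  refine ⟨fun y hy => ⟨hy.2.1, hy.2.2.1⟩, ?_, ?_⟩
  · -- chains
    intro D hD hne hcard hch
    obtain ⟨M₀, hM₀⟩ := hne
    refine ⟨(hD hM₀).1.trans (Set.subset_sUnion_of_mem hM₀), ?_, ?_, ?_, ?_, ?_, ?_⟩
    · intro a ha
      obtain ⟨M, hM, haM⟩ := ha
      exact (hD hM).2.1 haM
    · exact card_sUnion_lt hκ hcard (fun y hy => (hD hy).2.2.1)
    · exact ⟨M₀, hM₀, (hD hM₀).2.2.2.1⟩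
    · exact ⟨M₀, hM₀, (hD hM₀).2.2.2.2.1⟩
    · rintro n a b ⟨M₁, hM₁, ha⟩ ⟨M₂, hM₂, hb⟩
      rcases chain_total hch hM₁ hM₂ with hsub | hsub
      · exact ⟨M₂, hM₂, (hD hM₂).2.2.2.2.2.1 n a b (hsub ha) hb⟩
      · exact ⟨M₁, hM₁, (hD hM₁).2.2.2.2.2.1 n a b ha (hsub hb)⟩
    · rintro w ⟨M, hM, hw⟩ hwc
      exact ((hD hM).2.2.2.2.2.2 w hw hwc).trans (Set.subset_sUnion_of_mem hM)
  · -- cofinal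
    intro x hx hxc
    set step : Set ZFSet.{u} → Set ZFSet.{u} := fun s =>
      (s ∪ {z | ∃ (n : ℕ) (a b : ZFSet.{u}), a ∈ s ∧ b ∈ s ∧ z = F n a b}) ∪
        (⋃ w ∈ {w : ZFSet.{u} | w ∈ s ∧ #w.toSet < μ}, w.toSet) with hstep
    have hstep_sub : ∀ s, s ⊆ step s := fun s => (Set.subset_union_left).trans
      Set.subset_union_left
    have hstep_A : ∀ s, s ⊆ A → step s ⊆ A := by
      intro s hs z hz
      rcases hz with (hz | hz) | hz
      · exact hs hz
      · obtain ⟨n, a, b, ha, hb, rfl⟩ := hz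
        exact hAF n a b (hs ha) (hs hb)
      · simp only [Set.mem_iUnion] at hz
        obtain ⟨w, ⟨hw, _⟩, hzw⟩ := hz
        exact hA w (hs hw) hzw
    have hstep_card : ∀ s : Set ZFSet.{u}, #s < κ → #(step s) < κ := by
      intro s hsc
      have hpart2 : #{z : ZFSet.{u} | ∃ (n : ℕ) (a b : ZFSet.{u}),
          a ∈ s ∧ b ∈ s ∧ z = F n a b} < κ := by
        have hsurj : Function.Surjective (fun p : ULift.{u+1} ℕ × ↥s × ↥s =>
            (⟨F p.1.down p.2.1 p.2.2, ⟨p.1.down, p.2.1, p.2.2, p.2.1.2, p.2.2.2, rfl⟩⟩ :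
              {z : ZFSet.{u} | ∃ (n : ℕ) (a b : ZFSet.{u}), a ∈ s ∧ b ∈ s ∧ z = F n a b})) := by
          rintro ⟨z, n, a, b, ha, hb, rfl⟩
          exact ⟨⟨⟨n⟩, ⟨a, ha⟩, ⟨b, hb⟩⟩, rfl⟩
        refine lt_of_le_of_lt (Cardinal.mk_le_of_surjective hsurj) ?_
        have h1 : #(ULift.{u+1} ℕ) < κ := by
          rw [Cardinal.mk_uLift, Cardinal.mk_nat, Cardinal.lift_aleph0]
          exact hℵκ
        simp only [Cardinal.mk_prod, Cardinal.lift_id]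
        exact Cardinal.mul_lt_of_lt hκ.aleph0_le h1
          (Cardinal.mul_lt_of_lt hκ.aleph0_le hsc hsc)
      have hpart3 : #(⋃ w ∈ {w : ZFSet.{u} | w ∈ s ∧ #w.toSet < μ}, w.toSet) < κ := by
        rw [Set.biUnion_eq_iUnion]
        refine lt_of_le_of_lt Cardinal.mk_iUnion_le_sum_mk
          (Cardinal.sum_lt_of_isRegular hκ ?_ ?_)
        · exact lt_of_le_of_lt (Cardinal.mk_le_mk_of_subset (fun w hw => hw.1)) hsc
        · exact fun i => lt_of_lt_of_le i.2.2 hμκ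
      refine lt_of_le_of_lt (Cardinal.mk_union_le _ _) ?_
      refine Cardinal.add_lt_of_lt hκ.aleph0_le ?_ hpart3
      exact lt_of_le_of_lt (Cardinal.mk_union_le _ _)
        (Cardinal.add_lt_of_lt hκ.aleph0_le hsc hpart2)
    set g : ℕ → Set ZFSet.{u} := fun k => step^[k] (x ∪ R ∪ {∅, one}) with hgdef
    have hg0 : g 0 = x ∪ R ∪ {∅, one} := rfl
    have hgsucc : ∀ k, g (k + 1) = step (g k) := by
      intro k; simp only [hgdef, Function.iterate_succ_apply']
    have hgmono : ∀ k, g k ⊆ g (k + 1) := by intro k; rw [hgsucc]; exact hstep_sub _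
    have hbase_A : x ∪ R ∪ {∅, one} ⊆ A := by
      refine Set.union_subset (Set.union_subset hx hR) ?_
      intro z hz
      rcases hz with rfl | hz
      · exact hemp
      · rw [Set.mem_singleton_iff] at hz; rw [hz]; exact h1
    have hbase_card : #↑(x ∪ R ∪ ({∅, one} : Set ZFSet.{u})) < κ := by
      refine lt_of_le_of_lt (Cardinal.mk_union_le _ _) (Cardinal.add_lt_of_lt hκ.aleph0_le ?_ ?_)
      · exact lt_of_le_of_lt (Cardinal.mk_union_le _ _)
          (Cardinal.add_lt_of_lt hκ.aleph0_le hxc hRc)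
      · refine lt_of_le_of_lt (Cardinal.mk_insert_le) ?_
        refine Cardinal.add_lt_of_lt hκ.aleph0_le ?_ (lt_of_lt_of_le Cardinal.one_lt_aleph0
          hκ.aleph0_le)
        rw [Cardinal.mk_singleton]
        exact lt_of_lt_of_le Cardinal.one_lt_aleph0 hκ.aleph0_le
    have hgA : ∀ k, g k ⊆ A := by
      intro k
      induction k with
      | zero => exact hbase_A
      | succ m IH => rw [hgsucc]; exact hstep_A _ IH
    have hgcard : ∀ k, #(g k) < κ := by
      intro k
      induction k with
      | zero => exact hbase_card
      | succ m IH => rw [hgsucc]; exact hstep_card _ IH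
    set M : Set ZFSet.{u} := ⋃ k, g k with hM
    have hmemM : ∀ {a : ZFSet.{u}}, a ∈ M ↔ ∃ k, a ∈ g k := by
      intro a; simp [hM]
    have hgM : ∀ k, g k ⊆ M := fun k => Set.subset_iUnion g k
    have hMcard : #M < κ := by
      have he : M = ⋃ (k : ULift.{u+1} ℕ), g k.down := by
        apply le_antisymm
        · exact Set.iUnion_subset fun k => Set.subset_iUnion (fun k : ULift.{u+1} ℕ => g k.down) ⟨k⟩
        · exact Set.iUnion_subset fun k => hgM k.down
      rw [he]
      refine lt_of_le_of_lt Cardinal.mk_iUnion_le_sum_mk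
        (Cardinal.sum_lt_of_isRegular hκ ?_ (fun i => hgcard i.down))
      rw [Cardinal.mk_uLift, Cardinal.mk_nat, Cardinal.lift_aleph0]
      exact hℵκ
    refine ⟨M, ⟨?_, Set.iUnion_subset hgA, hMcard, ?_, ?_, ?_, ?_⟩, ?_⟩
    · exact ((Set.subset_union_right.trans Set.subset_union_left :
        R ⊆ x ∪ R ∪ {∅, one})).trans (hgM 0)
    · exact hgM 0 (Or.inr (Or.inl rfl))
    · exact hgM 0 (Or.inr (Or.inr rfl))
    · rintro n a b ha hb
      obtain ⟨k₁, hk₁⟩ := hmemM.1 ha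
      obtain ⟨k₂, hk₂⟩ := hmemM.1 hb
      refine hgM (max k₁ k₂ + 1) ?_
      rw [hgsucc]
      exact Or.inl (Or.inr ⟨n, a, b, mono_of_succ hgmono (le_max_left _ _) hk₁,
        mono_of_succ hgmono (le_max_right _ _) hk₂, rfl⟩)
    · intro w hw hwc z hz
      obtain ⟨k, hk⟩ := hmemM.1 hw
      refine hgM (k + 1) ?_
      rw [hgsucc]
      refine Or.inr ?_
      simp only [Set.mem_iUnion]
      exact ⟨w, ⟨hk, hwc⟩, hz⟩
    · exact (Set.subset_union_left.trans Set.subset_union_left).trans (hgM 0)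

end GMPAux

attribute [instance] setStructure

namespace GMPAux

open ZFSet Set FirstOrder FirstOrder.Language

instance : ∀ n, Countable (L.Functions n) := fun _ => inferInstanceAs (Countable Empty)

instance : ∀ n, Countable (L.Relations n) := fun n =>
  match n with
  | 0 => inferInstanceAs (Countable Empty)
  | 1 => inferInstanceAs (Countable Empty)
  | 2 => inferInstanceAs (Countable PUnit)
  | (_ + 3) => inferInstanceAs (Countable Empty)

instance : Countable L.Symbols := by
  unfold Language.Symbols
  infer_instance

theorem L_card_le_aleph0 : L.card ≤ Cardinal.aleph0 := Cardinal.mk_le_aleph0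

/-- The substructure of `↥A` given by a subset `M` of `ZFSet`. -/
def subOf (A M : Set ZFSet.{u}) : L.Substructure ↥A :=
  ⟨{a : ↥A | (a : ZFSet.{u}) ∈ M}, fun {_} f => f.elim⟩

theorem mem_subOf {A M : Set ZFSet.{u}} {a : ↥A} : a ∈ subOf A M ↔ (a : ZFSet.{u}) ∈ M :=
  Iff.rfl

/-- The equivalence between the `∈`-structure on `M` and the induced structure on
`subOf A M`, when `M ⊆ A`. -/
def memEquiv (A M : Set ZFSet.{u}) (h : M ⊆ A) : ↥M ≃[L] ↥(subOf A M) where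
  toFun := fun z => ⟨⟨z.1, h z.2⟩, z.2⟩
  invFun := fun s => ⟨s.1.1, s.2⟩
  left_inv := fun z => rfl
  right_inv := fun s => rfl
  map_fun' := fun {n} f _ => f.elim
  map_rel' := fun {n} r x => by
    match n, r with
    | 2, r => exact Iff.rfl

theorem elemIn_of_isElementary {θ : Cardinal.{u+1}} {M : Set ZFSet.{u}} (h : M ⊆ Hset θ)
    (he : (subOf (Hset θ) M).IsElementary) : ElemIn M (Hset θ) := by
  refine ⟨h, fun n φ v hM hA => ?_⟩
  set g := memEquiv (Hset θ) M h with hg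
  set w : Fin n → ↥M := fun i => ⟨v i, hM i⟩ with hw
  have h1 : φ.Realize (⇑g ∘ w) ↔ φ.Realize w := StrongHomClass.realize_formula g φ
  have h2 : φ.Realize ((Subtype.val : ↥(subOf (Hset θ) M) → ↥(Hset θ)) ∘ (⇑g ∘ w)) ↔
      φ.Realize (⇑g ∘ w) := he φ (⇑g ∘ w)
  have h3 : (Subtype.val : ↥(subOf (Hset θ) M) → ↥(Hset θ)) ∘ (⇑g ∘ w) =
      fun i => (⟨v i, hA i⟩ : ↥(Hset θ)) := by
    funext i
    exact Subtype.ext rfl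
  rw [h3] at h2
  exact h1.symm.trans h2.symm

/-- Turn a bounded formula with no free variables and `n` bound variables into a formula
with `n` free variables. -/
def toForm {n : ℕ} (ψ : L.BoundedFormula Empty n) : L.Formula (Fin n) :=
  ψ.toFormula.relabel (Sum.elim Empty.elim id)

theorem realize_toForm {n : ℕ} (ψ : L.BoundedFormula Empty n) {N : Type (u+1)}
    [L.Structure N] (w : Fin n → N) :
    (toForm ψ).Realize w ↔ ψ.Realize default w := by
  rw [toForm, Formula.realize_relabel, BoundedFormula.realize_toFormula]
  have h1 : ((w ∘ Sum.elim Empty.elim id) ∘ Sum.inl : Empty → N) = default :=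
    funext fun i => i.elim
  have h2 : ((w ∘ Sum.elim Empty.elim id) ∘ Sum.inr : Fin n → N) = w := rfl
  rw [h1, h2]

/-- A union of a chain of elementary subsets is elementary. -/
theorem isElementary_sUnion {A : Set ZFSet.{u}} {D : Set (Set ZFSet.{u})}
    (hne : D.Nonempty) (hch : IsChain (· ⊆ ·) D)
    (hsub : ∀ M ∈ D, M ⊆ A)
    (hel : ∀ M ∈ D, (subOf A M).IsElementary) :
    (subOf A (⋃₀ D)).IsElementary := by
  apply Substructure.isElementary_of_exists
  intro n φ x a hreal
  -- find a common member of the chain containing all parameters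
  have hcommon : ∀ (m : ℕ) (f : Fin m → ZFSet.{u}), (∀ i, f i ∈ ⋃₀ D) →
      ∃ M ∈ D, ∀ i, f i ∈ M := by
    intro m
    induction m with
    | zero => exact fun f _ => ⟨hne.choose, hne.choose_spec, fun i => i.elim0⟩
    | succ k IH =>
      intro f hf
      obtain ⟨M₁, hM₁, h₁⟩ := IH (fun i => f i.castSucc) (fun i => hf i.castSucc)
      obtain ⟨M₂, hM₂, h₂⟩ := hf (Fin.last k)
      rcases chain_total hch hM₁ hM₂ with hs | hs
      · refine ⟨M₂, hM₂, fun i => ?_⟩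
        rcases Fin.eq_castSucc_or_eq_last i with ⟨j, rfl⟩ | rfl
        · exact hs (h₁ j)
        · exact h₂
      · refine ⟨M₁, hM₁, fun i => ?_⟩
        rcases Fin.eq_castSucc_or_eq_last i with ⟨j, rfl⟩ | rfl
        · exact h₁ j
        · exact hs h₂
  obtain ⟨M, hMD, hM⟩ := hcommon n (fun i => ((x i : ↥A) : ZFSet.{u}))
    (fun i => (x i).2)
  set x' : Fin n → ↥(subOf A M) := fun i => ⟨(x i : ↥A), hM i⟩ with hx'
  have hvx : (Subtype.val ∘ x' : Fin n → ↥A) = Subtype.val ∘ x := rfl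
  -- ambient: ∃ y φ
  have hex : (toForm φ.ex).Realize (Subtype.val ∘ x : Fin n → ↥A) := by
    rw [realize_toForm, BoundedFormula.realize_ex]
    exact ⟨a, hreal⟩
  -- transfer down to M
  have hexM : (toForm φ.ex).Realize x' := by
    rw [← hel M hMD (toForm φ.ex) x', hvx]
    exact hex
  rw [realize_toForm, BoundedFormula.realize_ex] at hexM
  obtain ⟨b, hb⟩ := hexM
  -- transfer the witness back up
  have hup : (toForm φ).Realize (Fin.snoc x' b : Fin (n+1) → ↥(subOf A M)) := by
    rw [realize_toForm]
    exact hb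
  rw [← hel M hMD (toForm φ) (Fin.snoc x' b)] at hup
  have hsnoc : (Subtype.val ∘ Fin.snoc x' b : Fin (n+1) → ↥A) =
      Fin.snoc (Subtype.val ∘ x) (b : ↥A) := by
    rw [Fin.comp_snoc, hvx]
  rw [hsnoc, realize_toForm] at hup
  refine ⟨⟨(b : ↥A), ?_⟩, hup⟩
  exact ⟨M, hMD, b.2⟩

/-- Downward Löwenheim–Skolem, packaged for subsets of `Hset θ`. -/
theorem exists_elem_super {κ θ : Cardinal.{u+1}} (hκ : κ.IsRegular)
    (hℵκ : Cardinal.aleph0 < κ) (hθ : Cardinal.aleph0 ≤ θ)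
    (x : Set ZFSet.{u}) (hx : x ⊆ Hset θ) (hxc : #x < κ) :
    ∃ M : Set ZFSet.{u}, x ⊆ M ∧ M ⊆ Hset θ ∧ #M < κ ∧
      (subOf (Hset θ) M).IsElementary := by
  haveI : Nonempty ↥(Hset θ) := ⟨⟨∅, empty_mem_Hset hθ⟩⟩
  set s : Set ↥(Hset θ) := Subtype.val ⁻¹' x with hs
  have hsx : #s ≤ #x := Cardinal.mk_preimage_of_injective _ _ Subtype.val_injective
  set κ' : Cardinal.{u+1} := max #s Cardinal.aleph0 with hκ'
  have hκ'κ : κ' < κ := max_lt (lt_of_le_of_lt hsx hxc) hℵκ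
  have h1 : Cardinal.aleph0 ≤ κ' := le_max_right _ _
  have h2 : Cardinal.lift.{u+1} #s ≤ Cardinal.lift.{u+1} κ' := by
    rw [Cardinal.lift_le]; exact le_max_left _ _
  have h3 : Cardinal.lift.{u+1} L.card ≤ Cardinal.lift.{0} κ' := by
    rw [Cardinal.lift_id']
    calc Cardinal.lift.{u+1} L.card ≤ Cardinal.lift.{u+1} Cardinal.aleph0 :=
      Cardinal.lift_le.2 L_card_le_aleph0
    _ = Cardinal.aleph0 := Cardinal.lift_aleph0
    _ ≤ κ' := h1
  have h4 : Cardinal.lift.{u+1} κ' ≤ Cardinal.lift.{u+1} #(↥(Hset θ)) := by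
    rw [Cardinal.lift_le]
    refine max_le ?_ (aleph0_le_mk_Hset hθ)
    exact le_trans (Cardinal.mk_preimage_of_injective _ _ Subtype.val_injective)
      (Cardinal.mk_le_mk_of_subset hx)
  obtain ⟨S, hsS, hScard⟩ :=
    exists_elementarySubstructure_card_eq L s κ' h1 h2 h3 h4
  rw [Cardinal.lift_inj] at hScard
  refine ⟨Subtype.val '' (S : Set ↥(Hset θ)), ?_, ?_, ?_, ?_⟩
  · intro a ha
    have hmem : (⟨a, hx ha⟩ : ↥(Hset θ)) ∈ s := ha
    exact ⟨⟨a, hx ha⟩, hsS hmem, rfl⟩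
  · rintro _ ⟨a, _, rfl⟩
    exact a.2
  · have hss : #(↥(S : Set ↥(Hset θ))) = κ' := hScard
    exact lt_of_le_of_lt (le_trans Cardinal.mk_image_le (le_of_eq hss)) hκ'κ
  · have hcar : subOf (Hset θ) (Subtype.val '' (S : Set ↥(Hset θ))) =
        (S : L.Substructure ↥(Hset θ)) := by
      apply SetLike.ext
      intro a
      rw [mem_subOf]
      constructor
      · rintro ⟨a', ha', hval⟩
        rwa [← Subtype.val_injective hval]
      · intro haS
        exact ⟨a, haS, rfl⟩
    rw [hcar]
    exact S.isElementary
end GMPAux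

namespace GMPAux

open ZFSet Set FirstOrder

/-- The closure operations used in the construction. -/
noncomputable def Fop : ℕ → ZFSet.{u} → ZFSet.{u} → ZFSet.{u}
  | 0, a, b => a ∩ b
  | 1, a, b => a ∪ b
  | 2, a, _ => ZFSet.pair ∅ a
  | 3, a, _ => ZFSet.pair one a
  | 4, p, y => ZFSet.sep (fun q => q = p) y
  | 5, y, _ => ZFSet.sep (fun a => ZFSet.pair one a ∈ y) (⋃₀ (⋃₀ y))
  | 6, w, _ => ZFSet.sep (fun p => ∃ a ∈ w, p = ZFSet.pair one a)
      (ZFSet.powerset (ZFSet.powerset (insert one w)))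
  | _+7, _, _ => ∅

theorem F5_toSet (y b : ZFSet.{u}) :
    (Fop 5 y b).toSet = {a : ZFSet.{u} | ZFSet.pair one a ∈ y} := by
  ext a
  simp only [Fop, ZFSet.mem_toSet, ZFSet.mem_sep, Set.mem_setOf_eq]
  constructor
  · exact fun h => h.2
  · intro h
    refine ⟨?_, h⟩
    refine ZFSet.mem_sUnion.2 ⟨{one, a}, ZFSet.mem_sUnion.2 ⟨ZFSet.pair one a, h, ?_⟩, ?_⟩
    · unfold ZFSet.pair
      exact ZFSet.mem_pair.2 (Or.inr rfl)
    · exact ZFSet.mem_pair.2 (Or.inr rfl)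

theorem F5_card (y b : ZFSet.{u}) : #(Fop 5 y b).toSet ≤ #y.toSet := by
  rw [F5_toSet]
  have hinj : Function.Injective
      (fun a : ↥{a : ZFSet.{u} | ZFSet.pair one a ∈ y} =>
        (⟨ZFSet.pair one a.1, a.2⟩ : ↥y.toSet)) := by
    intro a a' h
    exact Subtype.ext (ZFSet.pair_injective (congrArg Subtype.val h)).2
  exact Cardinal.mk_le_of_injective hinj

theorem pair_one_mem_powerset {w a : ZFSet.{u}} (ha : a ∈ w) :
    ZFSet.pair one a ∈ ZFSet.powerset (ZFSet.powerset (insert one w)) := by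
  rw [ZFSet.mem_powerset]
  intro t ht
  unfold ZFSet.pair at ht
  rw [ZFSet.mem_powerset]
  rcases ZFSet.mem_pair.1 ht with rfl | rfl
  · intro z hz
    rw [ZFSet.mem_singleton] at hz
    rw [hz]
    exact ZFSet.mem_insert_iff.2 (Or.inl rfl)
  · intro z hz
    rcases ZFSet.mem_pair.1 hz with rfl | rfl
    · exact ZFSet.mem_insert_iff.2 (Or.inl rfl)
    · exact ZFSet.mem_insert_iff.2 (Or.inr ha)

theorem F6_toSet (w b : ZFSet.{u}) :
    (Fop 6 w b).toSet = {p : ZFSet.{u} | ∃ a ∈ w, p = ZFSet.pair one a} := by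
  ext p
  simp only [Fop, ZFSet.mem_toSet, ZFSet.mem_sep, Set.mem_setOf_eq]
  constructor
  · exact fun h => h.2
  · rintro ⟨a, ha, rfl⟩
    exact ⟨pair_one_mem_powerset ha, a, ha, rfl⟩

theorem F6_card (w b : ZFSet.{u}) : #(Fop 6 w b).toSet ≤ #w.toSet := by
  rw [F6_toSet]
  set T := {p : ZFSet.{u} | ∃ a ∈ w, p = ZFSet.pair one a} with hT
  have hspec : ∀ p : ↥T, ∃ a, a ∈ w ∧ p.1 = ZFSet.pair one a := fun p => p.2
  have hinj : Function.Injective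
      (fun p : ↥T => (⟨(hspec p).choose, (hspec p).choose_spec.1⟩ : ↥w.toSet)) := by
    intro p p' h
    apply Subtype.ext
    rw [(hspec p).choose_spec.2, (hspec p').choose_spec.2]
    exact congrArg (ZFSet.pair one) (congrArg Subtype.val h)
  exact Cardinal.mk_le_of_injective hinj

theorem Fop_mem_Hset {θ : Cardinal.{u+1}} (hθ : Cardinal.aleph0 ≤ θ)
    (n : ℕ) (a b : ZFSet.{u}) (ha : a ∈ Hset θ) (hb : b ∈ Hset θ) :
    Fop n a b ∈ Hset θ := by
  match n with
  | 0 => exact inter_mem_Hset ha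
  | 1 => exact union_mem_Hset hθ ha hb
  | 2 => exact pair_mem_Hset hθ (empty_mem_Hset hθ) ha
  | 3 => exact pair_mem_Hset hθ (one_mem_Hset hθ) ha
  | 4 => unfold Fop; exact sep_mem_Hset hb
  | 5 =>
    refine mem_Hset_of (fun z hz => ?_) ?_
    · have hz' : ZFSet.pair one z ∈ a := by
        have := (ZFSet.mem_toSet _ _).2 hz
        rw [F5_toSet] at this
        exact this
      have h1 : ZFSet.pair one z ∈ Hset θ := Hset_mem ha hz'
      have h2 : ({one, z} : ZFSet.{u}) ∈ ZFSet.pair one z := by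
        unfold ZFSet.pair; exact ZFSet.mem_pair.2 (Or.inr rfl)
      exact Hset_mem (Hset_mem h1 h2) (ZFSet.mem_pair.2 (Or.inr rfl))
    · exact lt_of_le_of_lt (F5_card a b) (card_Hset_mem ha)
  | 6 =>
    refine mem_Hset_of (fun z hz => ?_) ?_
    · have hz' : ∃ c ∈ a, z = ZFSet.pair one c := by
        have := (ZFSet.mem_toSet _ _).2 hz
        rw [F6_toSet] at this
        exact this
      obtain ⟨c, hc, rfl⟩ := hz'
      exact pair_mem_Hset hθ (one_mem_Hset hθ) (Hset_mem ha hc)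
    · exact lt_of_le_of_lt (F6_card a b) (card_Hset_mem ha)
  | (m+7) => exact empty_mem_Hset hθ

/-- The master club: closure properties together with elementarity. -/
def Gset (μ κ θ : Cardinal.{u+1}) (R : Set ZFSet.{u}) : Set (Set ZFSet.{u}) :=
  {M | IsCl μ κ Fop (Hset θ) R M} ∩
    {M | M ⊆ Hset θ ∧ #M < κ ∧ (subOf (Hset θ) M).IsElementary}

theorem elem_club {κ θ : Cardinal.{u+1}} (hκ : κ.IsRegular) (hℵκ : Cardinal.aleph0 < κ)
    (hθ : Cardinal.aleph0 ≤ θ) :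
    ClubIn κ (Hset θ) {M | M ⊆ Hset θ ∧ #M < κ ∧ (subOf (Hset θ) M).IsElementary} := by
  refine ⟨fun y hy => ⟨hy.1, hy.2.1⟩, ?_, ?_⟩
  · intro D hD hne hcard hch
    refine ⟨?_, card_sUnion_lt hκ hcard (fun y hy => (hD hy).2.1), ?_⟩
    · intro a ha
      obtain ⟨M, hM, haM⟩ := ha
      exact (hD hM).1 haM
    · exact isElementary_sUnion hne hch (fun M hM => (hD hM).1) (fun M hM => (hD hM).2.2)
  · intro x hx hxc
    obtain ⟨M, h1, h2, h3, h4⟩ := exists_elem_super hκ hℵκ hθ x hx hxc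
    exact ⟨M, ⟨h2, h3, h4⟩, h1⟩

theorem Gset_club {μ κ θ : Cardinal.{u+1}} (hκ : κ.IsRegular) (hℵκ : Cardinal.aleph0 < κ)
    (hμκ : μ ≤ κ) (hθ : Cardinal.aleph0 ≤ θ)
    {R : Set ZFSet.{u}} (hR : R ⊆ Hset θ) (hRc : #R < κ) :
    ClubIn κ (Hset θ) (Gset μ κ θ R) :=
  club_inter hκ hℵκ
    (Ecl_club hκ hℵκ hμκ Fop (fun x hx => Hset_toSet_subset hx) (Fop_mem_Hset hθ)
      (empty_mem_Hset hθ) (one_mem_Hset hθ) hR hRc)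
    (elem_club hκ hℵκ hθ)

end GMPAux

namespace GMPAux

open ZFSet Set

theorem F0_def (a b : ZFSet.{u}) : Fop 0 a b = a ∩ b := rfl
theorem F1_def (a b : ZFSet.{u}) : Fop 1 a b = a ∪ b := rfl
theorem F2_def (a b : ZFSet.{u}) : Fop 2 a b = ZFSet.pair ∅ a := rfl
theorem F3_def (a b : ZFSet.{u}) : Fop 3 a b = ZFSet.pair one a := rfl
theorem F4_def (p y : ZFSet.{u}) : Fop 4 p y = ZFSet.sep (fun q => q = p) y := rfl

theorem F4_toSet (p y : ZFSet.{u}) :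
    (Fop 4 p y).toSet = {q : ZFSet.{u} | q ∈ y.toSet ∧ q = p} := by
  rw [F4_def, ZFSet.toSet_sep]

end GMPAux


open GMPAux

/-- If `μ ≤ κ ≤ θ` are regular uncountable, `Y ⊆ P_κ(H(θ))` is stationary, and
`ISP_Y(μ, κ, H(θ))` holds (every `μ`-`Y`-slender `(κ, H(θ))`-list has a `Y`-ineffable
branch), then `GMP_Y(μ, κ, θ)` holds: the set of `M ∈ Y` that are `μ`-guessing models
is stationary in `P_κ(H(θ))`. -/
theorem stmt12 (μ κ θ : Cardinal.{u + 1})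
    (hμreg : μ.IsRegular) (hκreg : κ.IsRegular) (hθreg : θ.IsRegular)
    (hμunc : Cardinal.aleph0 < μ) (hμκ : μ ≤ κ) (hκθ : κ ≤ θ)
    (Y : Set (Set ZFSet.{u})) (hY : StatIn κ (Hset θ) Y)
    (hISP : ∀ d : Set ZFSet.{u} → Set ZFSet.{u}, (∀ x : Set ZFSet.{u}, d x ⊆ x) →
      Slender μ κ (Hset θ) Y d → ∃ b : Set ZFSet.{u}, IneffBranch κ (Hset θ) Y d b) :
    StatIn κ (Hset θ)
      {M : Set ZFSet.{u} | M ∈ Y ∧ ElemIn M (Hset θ) ∧ ∀ x ∈ M, GuessingFor μ M x} := by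
  classical
  have hℵκ : Cardinal.aleph0 < κ := lt_of_lt_of_le hμunc hμκ
  have hθℵ : Cardinal.aleph0 ≤ θ := le_trans hκreg.aleph0_le hκθ
  have hμθ : μ ≤ θ := hμκ.trans hκθ
  refine ⟨fun M hM => hY.1 M hM.1, ?_⟩
  intro C₀ hC₀
  by_contra hne
  have hnone : ∀ M : Set ZFSet.{u}, M ∈ Y → M ∈ C₀ → ElemIn M (Hset θ) →
      ¬(∀ x ∈ M, GuessingFor μ M x) := by
    intro M h1 h2 h3 h4
    exact hne ⟨M, ⟨h1, h3, h4⟩, h2⟩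
  set Q : Set (Set ZFSet.{u}) := {M | M ∈ Y ∧ M ∈ C₀ ∧ M ∈ Gset μ κ θ ∅} with hQdef
  -- every member of `Q` has a non-guessed approximated set
  have hfail : ∀ M ∈ Q, ∃ x : ZFSet.{u}, x ∈ M ∧ ∃ dd : Set ZFSet.{u},
      dd ⊆ x.toSet ∧ Approx μ M x dd ∧ ¬Guessed M dd := by
    intro M hQM
    have helem : ElemIn M (Hset θ) := elemIn_of_isElementary hQM.2.2.2.1 hQM.2.2.2.2.2
    have hng := hnone M hQM.1 hQM.2.1 helem
    obtain ⟨x, hx⟩ := not_forall.1 hng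
    rw [Classical.not_imp] at hx
    obtain ⟨hxM, hP⟩ := hx
    rw [GuessingFor] at hP
    obtain ⟨dd, hdd⟩ := not_forall.1 hP
    rw [Classical.not_imp, Classical.not_imp] at hdd
    exact ⟨x, hxM, dd, hdd.1, hdd.2.1, hdd.2.2⟩
  -- choice of counterexample data
  set xo : Set ZFSet.{u} → ZFSet.{u} := fun M =>
    if h : M ∈ Q then (hfail M h).choose else ∅ with hxo
  set Ao : Set ZFSet.{u} → Set ZFSet.{u} := fun M =>
    if h : M ∈ Q then (hfail M h).choose_spec.2.choose else ∅ with hAo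
  have hspec : ∀ M, ∀ h : M ∈ Q, xo M ∈ M ∧ Ao M ⊆ (xo M).toSet ∧
      Approx μ M (xo M) (Ao M) ∧ ¬Guessed M (Ao M) := by
    intro M h
    simp only [hxo, hAo, dif_pos h]
    exact ⟨(hfail M h).choose_spec.1, (hfail M h).choose_spec.2.choose_spec⟩
  -- the tagged slender list
  set dL : Set ZFSet.{u} → Set ZFSet.{u} := fun M =>
    if h : M ∈ Q then
      insert (ZFSet.pair ∅ (xo M)) ((fun a => ZFSet.pair one a) '' (Ao M ∩ M))
    else ∅ with hdL
  have hdLpos : ∀ M ∈ Q, dL M =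
      insert (ZFSet.pair ∅ (xo M)) ((fun a => ZFSet.pair one a) '' (Ao M ∩ M)) := by
    intro M h
    simp only [hdL, dif_pos h]
  have hdLneg : ∀ M, M ∉ Q → dL M = ∅ := by
    intro M h
    simp only [hdL, dif_neg h]
  have hdsub : ∀ M : Set ZFSet.{u}, dL M ⊆ M := by
    intro M t ht
    by_cases h : M ∈ Q
    · have hIsCl := h.2.2.1
      have hemp : (∅ : ZFSet.{u}) ∈ M := hIsCl.2.2.2.1
      have hclos := hIsCl.2.2.2.2.2.1
      rw [hdLpos M h] at ht
      rcases Set.mem_insert_iff.1 ht with rfl | ⟨a, ha, rfl⟩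
      · have := hclos 2 (xo M) ∅ (hspec M h).1 hemp
        rwa [F2_def] at this
      · have := hclos 3 a ∅ ha.2 hemp
        rwa [F3_def] at this
    · rw [hdLneg M h] at ht
      exact absurd ht (Set.notMem_empty t)
  -- slenderness
  have hslender : Slender μ κ (Hset θ) Y dL := by
    refine ⟨θ, fun θ' hθ' => ?_⟩
    have hθ'ℵ : Cardinal.aleph0 ≤ θ' := hθℵ.trans hθ'
    have hHsub : Hset θ ⊆ Hset θ' := Hset_mono hθ'
    have hEclub := Ecl_club (A := Hset θ') hκreg hℵκ hμκ Fop
      (fun x hx => Hset_toSet_subset hx) (Fop_mem_Hset hθ'ℵ) (empty_mem_Hset hθ'ℵ)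
      (one_mem_Hset hθ'ℵ) (Set.empty_subset _)
      (by simpa using lt_of_lt_of_le Cardinal.aleph0_pos hκreg.aleph0_le)
    refine ⟨_, hEclub, ?_⟩
    intro M' hM' hMY y hyM' hysub hycard
    have hM'IsCl : IsCl μ κ Fop (Hset θ') ∅ M' := hM'
    have hempM' : (∅ : ZFSet.{u}) ∈ M' := hM'IsCl.2.2.2.1
    have hclosM' := hM'IsCl.2.2.2.2.2.1
    by_cases hQM : M' ∩ Hset θ ∈ Q
    · -- main case
      set M := M' ∩ Hset θ with hMdef
      obtain ⟨hx0M, hA0sub, hApprox, _⟩ := hspec M hQM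
      have hIsClM : IsCl μ κ Fop (Hset θ) ∅ M := hQM.2.2.1
      have hempM : (∅ : ZFSet.{u}) ∈ M := hIsClM.2.2.2.1
      have hclosM := hIsClM.2.2.2.2.2.1
      have habsM := hIsClM.2.2.2.2.2.2
      have hMM' : M ⊆ M' := Set.inter_subset_left
      have hyHθ : y ∈ Hset θ := mem_Hset_of (fun a ha => hysub ha)
        (lt_of_lt_of_le hycard hμθ)
      have hyM : y ∈ M := ⟨hyM', hyHθ⟩
      -- y' = {a | pair one a ∈ y}
      set y' := Fop 5 y ∅ with hy'def
      have hy'M' : y' ∈ M' := hclosM' 5 y ∅ hyM' hempM'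
      have hy'card : #y'.toSet < μ := lt_of_le_of_lt (F5_card y ∅) hycard
      have hy'Hθ : y' ∈ Hset θ := by
        refine mem_Hset_of (fun a ha => ?_) (lt_of_lt_of_le hy'card hμθ)
        have hpa : ZFSet.pair one a ∈ y := by
          have h1 : a ∈ (Fop 5 y ∅).toSet := (ZFSet.mem_toSet _ _).2 ha
          rw [F5_toSet] at h1
          exact h1
        have h1 : ZFSet.pair one a ∈ Hset θ := Hset_mem hyHθ hpa
        have h2 : ({one, a} : ZFSet.{u}) ∈ ZFSet.pair one a := by
          unfold ZFSet.pair
          exact ZFSet.mem_pair.2 (Or.inr rfl)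
        exact Hset_mem (Hset_mem h1 h2) (ZFSet.mem_pair.2 (Or.inr rfl))
      have hy'M : y' ∈ M := ⟨hy'M', hy'Hθ⟩
      -- z = y' ∩ x₀
      set z := Fop 0 y' (xo M) with hzdef
      have hzM : z ∈ M := hclosM 0 y' (xo M) hy'M hx0M
      have hz0 : z = y' ∩ xo M := F0_def _ _
      have hzsub : z.toSet ⊆ (xo M).toSet := by
        rw [hz0, ZFSet.toSet_inter]
        exact Set.inter_subset_right
      have hzsuby' : z.toSet ⊆ y'.toSet := by
        rw [hz0, ZFSet.toSet_inter]
        exact Set.inter_subset_left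
      have hzcard : #z.toSet < μ :=
        lt_of_le_of_lt (Cardinal.mk_le_mk_of_subset hzsuby') hy'card
      obtain ⟨e', he'M, he'eq⟩ := hApprox z hzM hzsub hzcard
      -- w = e' ∩ z; its elements are exactly A₀ ∩ y'
      set w := Fop 0 e' z with hwdef
      have hwM : w ∈ M := hclosM 0 e' z he'M hzM
      have hwtoSet : w.toSet = Ao M ∩ y'.toSet := by
        have h1 : w.toSet = e'.toSet ∩ z.toSet := by
          rw [hwdef, F0_def, ZFSet.toSet_inter]
        rw [h1, ← he'eq, hz0, ZFSet.toSet_inter]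
        ext t
        simp only [Set.mem_inter_iff]
        constructor
        · rintro ⟨h1, h2, _⟩
          exact ⟨h1, h2⟩
        · rintro ⟨h1, h2⟩
          exact ⟨h1, h2, hA0sub h1⟩
      have hwcard : #w.toSet < μ := by
        rw [hwtoSet]
        exact lt_of_le_of_lt (Cardinal.mk_le_mk_of_subset Set.inter_subset_right) hy'card
      have hwsubM : w.toSet ⊆ M := habsM w hwM hwcard
      have hkey : ∀ a : ZFSet.{u}, a ∈ w ↔ (a ∈ Ao M ∧ a ∈ M) ∧ ZFSet.pair one a ∈ y := by
        intro a
        constructor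
        · intro haw
          have h1 : a ∈ w.toSet := (ZFSet.mem_toSet _ _).2 haw
          have h2 := h1
          rw [hwtoSet] at h2
          have h3 : a ∈ {a : ZFSet.{u} | ZFSet.pair one a ∈ y} := by
            rw [← F5_toSet y ∅]
            exact h2.2
          exact ⟨⟨h2.1, hwsubM h1⟩, h3⟩
        · rintro ⟨⟨h1, _⟩, h2⟩
          have h3 : a ∈ y'.toSet := by
            rw [hy'def, F5_toSet]
            exact h2
          have : a ∈ w.toSet := by
            rw [hwtoSet]
            exact ⟨h1, h3⟩
          exact (ZFSet.mem_toSet _ _).1 this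
      -- assemble the element of M'
      have hp0M : ZFSet.pair ∅ (xo M) ∈ M := by
        have := hclosM 2 (xo M) ∅ hx0M hempM
        rwa [F2_def] at this
      set s₁ := Fop 4 (ZFSet.pair ∅ (xo M)) y with hs₁def
      have hs₁M' : s₁ ∈ M' := hclosM' 4 _ y (hMM' hp0M) hyM'
      set s₂ := Fop 6 w ∅ with hs₂def
      have hs₂M' : s₂ ∈ M' := hclosM' 6 w ∅ (hMM' hwM) hempM'
      refine ⟨Fop 1 s₁ s₂, hclosM' 1 s₁ s₂ hs₁M' hs₂M', ?_⟩
      rw [F1_def, ZFSet.toSet_union, hdLpos M hQM]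
      ext t
      simp only [Set.mem_union, Set.mem_inter_iff, Set.mem_insert_iff, Set.mem_image]
      constructor
      · rintro (ht | ht)
        · rw [hs₁def, F4_toSet] at ht
          exact ⟨Or.inl ht.2, ht.1⟩
        · rw [hs₂def] at ht
          have ht' : t ∈ (Fop 6 w ∅).toSet := ht
          rw [F6_toSet] at ht'
          obtain ⟨a, haw, rfl⟩ := ht'
          have h1 := (hkey a).1 haw
          exact ⟨Or.inr ⟨a, ⟨h1.1.1, h1.1.2⟩, rfl⟩, (ZFSet.mem_toSet _ _).1 h1.2⟩
      · rintro ⟨(rfl | ⟨a, ⟨haA, haM⟩, rfl⟩), hty⟩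
        · refine Or.inl ?_
          rw [hs₁def, F4_toSet]
          exact ⟨hty, rfl⟩
        · refine Or.inr ?_
          have haw : a ∈ w := (hkey a).2 ⟨⟨haA, haM⟩, (ZFSet.mem_toSet _ _).2 hty⟩
          have : ZFSet.pair one a ∈ (Fop 6 w ∅).toSet := by
            rw [F6_toSet]
            exact ⟨a, haw, rfl⟩
          rw [hs₂def]
          exact this
    · -- trivial case: the list value is empty
      refine ⟨∅, hempM', ?_⟩
      rw [hdLneg _ hQM, ZFSet.toSet_empty, Set.empty_inter]
  -- apply ISP
  obtain ⟨b, hbsub, hbstat⟩ := hISP dL hdsub hslender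
  -- first model M₀
  have hGclub₀ : ClubIn κ (Hset θ) (Gset μ κ θ ∅) :=
    Gset_club hκreg hℵκ hμκ hθℵ (Set.empty_subset _)
      (by simpa using lt_of_lt_of_le Cardinal.aleph0_pos hκreg.aleph0_le)
  obtain ⟨M₀, hM₀S, hM₀C₀, hM₀G⟩ :=
    hbstat.2 (C₀ ∩ Gset μ κ θ ∅) (club_inter hκreg hℵκ hC₀ hGclub₀)
  have hQM₀ : M₀ ∈ Q := ⟨hM₀S.1, hM₀C₀, hM₀G⟩
  have hbM₀ : b ∩ M₀ = dL M₀ := hM₀S.2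
  have hM₀Hθ : M₀ ⊆ Hset θ := hQM₀.2.2.1.2.1
  obtain ⟨hx0M₀, _, _, _⟩ := hspec M₀ hQM₀
  set p₀ := ZFSet.pair ∅ (xo M₀) with hp₀def
  have hp₀M₀ : p₀ ∈ M₀ := by
    have := hQM₀.2.2.1.2.2.2.2.2.1 2 (xo M₀) ∅ hx0M₀ hQM₀.2.2.1.2.2.2.1
    rwa [F2_def] at this
  have hp₀b : p₀ ∈ b := by
    have h1 : p₀ ∈ dL M₀ := by
      rw [hdLpos M₀ hQM₀]
      exact Set.mem_insert _ _
    rw [← hbM₀] at h1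
    exact h1.1
  set e := ZFSet.sep (fun a => ZFSet.pair one a ∈ b) (xo M₀) with hedef
  have heHθ : e ∈ Hset θ := sep_mem_Hset (hM₀Hθ hx0M₀)
  -- second model N
  set R : Set ZFSet.{u} := {p₀, e} with hRdef
  have hRHθ : R ⊆ Hset θ := by
    intro t ht
    rcases ht with rfl | ht
    · exact hM₀Hθ hp₀M₀
    · rw [Set.mem_singleton_iff] at ht
      rw [ht]
      exact heHθ
  have hRc : #R < κ := lt_of_lt_of_le (Set.toFinite R).lt_aleph0 hκreg.aleph0_le
  obtain ⟨N, hNS, hNC₀, hNG⟩ :=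
    hbstat.2 (C₀ ∩ Gset μ κ θ R) (club_inter hκreg hℵκ hC₀ (Gset_club hκreg hℵκ hμκ hθℵ hRHθ hRc))
  have hNIsCl : IsCl μ κ Fop (Hset θ) R N := hNG.1
  have hQN : N ∈ Q := ⟨hNS.1, hNC₀, ⟨Set.empty_subset _, hNIsCl.2⟩, hNG.2⟩
  have hbN : b ∩ N = dL N := hNS.2
  obtain ⟨hx1N, hA1sub, _, hnotG⟩ := hspec N hQN
  have hRN : R ⊆ N := hNIsCl.1
  have hp₀N : p₀ ∈ N := hRN (Set.mem_insert _ _)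
  have heN : e ∈ N := hRN (Set.mem_insert_iff.2 (Or.inr rfl))
  have hempN : (∅ : ZFSet.{u}) ∈ N := hNIsCl.2.2.2.1
  have hclosN := hNIsCl.2.2.2.2.2.1
  -- the tags agree, so `xo N = xo M₀`
  have hx10 : xo N = xo M₀ := by
    have h1 : p₀ ∈ dL N := by
      rw [← hbN]
      exact ⟨hp₀b, hp₀N⟩
    rw [hdLpos N hQN] at h1
    rcases Set.mem_insert_iff.1 h1 with heq | ⟨a, _, heq⟩
    · exact ((ZFSet.pair_injective heq).2).symm
    · exact absurd ((ZFSet.pair_injective heq).1) one_ne_empty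
  -- contradiction: e guesses Ao N over N
  refine hnotG ⟨e, heN, ?_⟩
  ext a
  simp only [Set.mem_inter_iff]
  constructor
  · rintro ⟨haA, haN⟩
    have hax : a ∈ xo M₀ := by
      have h1 : a ∈ (xo N).toSet := hA1sub haA
      rw [hx10] at h1
      exact (ZFSet.mem_toSet _ _).1 h1
    have hpairdL : ZFSet.pair one a ∈ dL N := by
      rw [hdLpos N hQN]
      exact Set.mem_insert_iff.2 (Or.inr ⟨a, ⟨haA, haN⟩, rfl⟩)
    have hpairb : ZFSet.pair one a ∈ b := by
      rw [← hbN] at hpairdL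
      exact hpairdL.1
    refine ⟨?_, haN⟩
    have : a ∈ e := by
      rw [hedef]
      exact ZFSet.mem_sep.2 ⟨hax, hpairb⟩
    exact (ZFSet.mem_toSet _ _).2 this
  · rintro ⟨hae, haN⟩
    have h1 : a ∈ e := (ZFSet.mem_toSet _ _).1 hae
    rw [hedef] at h1
    obtain ⟨_, hpairb⟩ := ZFSet.mem_sep.1 h1
    have hpairN : ZFSet.pair one a ∈ N := by
      have := hclosN 3 a ∅ haN hempN
      rwa [F3_def] at this
    have hpairdL : ZFSet.pair one a ∈ dL N := by
      rw [← hbN]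
      exact ⟨hpairb, hpairN⟩
    rw [hdLpos N hQN] at hpairdL
    rcases Set.mem_insert_iff.1 hpairdL with heq | ⟨a', ha', heq⟩
    · exact absurd (ZFSet.pair_injective heq).1 one_ne_empty
    · have : a' = a := (ZFSet.pair_injective heq).2
      rw [this] at ha'
      exact ⟨ha'.1, haN⟩
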